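/- Let $(X,d)$ be a metric space and $S(t) : X \to X$ a semigroup. Suppose: (i) there exist $c_0 \ge 0$ and $L \ge 0$ such that $d(S(t)x, S(t)y) \le c_0 e^{Lt} d(x,y)$ for all $x,y \in X$, $t \ge 0$; (ii) there are sets $B, B_1, E \subset X$ and constants $M, J_0 \ge 0$, $\gamma, \omega_0 > 0$ such that $\mathrm{dist}(S(t)B, B_1) \le M e^{-\gamma t}$ and $\mathrm{dist}(S(t)B_1, E) \le J_0 e^{-\omega_0 t}$ for all $t \ge 0$, where $\mathrm{dist}$ is the Hausdorff semidistance. Then $\mathrm{dist}(S(t)B, E) \le J e^{-\omega t}$ for all $t \ge 0$, with $J = c_0 M + J_0$ and $\omega = \frac{\gamma\omega_0}{L + \gamma + \omega_0}$. -/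

import Mathlib

open EMetric

/-- Hausdorff semidistance `dist(A,B) = sup_{a∈A} inf_{b∈B} d(a,b)` (in `ℝ≥0∞`). -/
noncomputable def semidist {X : Type*} [MetricSpace X] (A B : Set X) : ENNReal :=
  ⨆ a ∈ A, EMetric.infEdist a B

/-- Transitivity of exponential attraction (Fabrie–Galusinski–Miranville–Zelik). -/
theorem stmt_6 {X : Type*} [MetricSpace X] (S : ℝ → X → X)
    (hS0 : S 0 = id)
    (hSsemi : ∀ t s : ℝ, 0 ≤ t → 0 ≤ s → S (t + s) = S t ∘ S s)
    (c0 L : ℝ) (hc0 : 0 ≤ c0) (hL : 0 ≤ L)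
    (hlip : ∀ (x y : X) (t : ℝ), 0 ≤ t →
      dist (S t x) (S t y) ≤ c0 * Real.exp (L * t) * dist x y)
    (B B1 E : Set X) (M J0 γ ω0 : ℝ)
    (hM : 0 ≤ M) (hJ0 : 0 ≤ J0) (hγ : 0 < γ) (hω0 : 0 < ω0)
    (hBB1 : ∀ t ≥ (0:ℝ), semidist (S t '' B) B1 ≤ ENNReal.ofReal (M * Real.exp (-γ * t)))
    (hB1E : ∀ t ≥ (0:ℝ), semidist (S t '' B1) E ≤ ENNReal.ofReal (J0 * Real.exp (-ω0 * t))) :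
    ∀ t ≥ (0:ℝ), semidist (S t '' B) E ≤
      ENNReal.ofReal ((c0 * M + J0) * Real.exp (-(γ * ω0 / (L + γ + ω0)) * t)) := by
  intro t ht
  have hDpos : 0 < L + γ + ω0 := by linarith
  set D := L + γ + ω0 with hD
  set ω := γ * ω0 / D with hω
  set r := γ * t / D with hr
  set s := t - r with hs
  have hr0 : 0 ≤ r := by positivity
  have hs0 : 0 ≤ s := by
    rw [hs, sub_nonneg, hr, div_le_iff₀ hDpos]
    nlinarith [mul_nonneg hL ht, mul_nonneg hω0.le ht]
  have hrs : r + s = t := by rw [hs]; ring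
  have hexp1 : L * r + -γ * s = -ω * t := by
    rw [hs, hr, hω]; field_simp; ring
  have hexp2 : -ω0 * r = -ω * t := by
    rw [hr, hω]; field_simp
  rw [semidist]
  refine iSup₂_le ?_
  rintro a ⟨x, hx, rfl⟩
  have hts : S t x = S r (S s x) := by
    rw [← hrs, hSsemi r s hr0 hs0]; rfl
  set z := S s x with hz
  set Kmul := ENNReal.ofReal (c0 * Real.exp (L * r)) with hK
  have hKne : Kmul ≠ ⊤ := ENNReal.ofReal_ne_top
  set δ := ENNReal.ofReal (M * Real.exp (-γ * s)) with hδ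
  have hδne : δ ≠ ⊤ := ENNReal.ofReal_ne_top
  set J : ENNReal := ENNReal.ofReal (J0 * Real.exp (-ω0 * r)) with hJ
  have hzB1 : EMetric.infEdist z B1 ≤ δ := by
    refine le_trans ?_ (hBB1 s hs0)
    exact le_iSup₂ (f := fun a (_ : a ∈ S s '' B) => EMetric.infEdist a B1) z ⟨x, hx, rfl⟩
  have key : EMetric.infEdist (S t x) E ≤ Kmul * δ + J := by
    refine ENNReal.le_of_forall_pos_le_add fun ε hε hlt => ?_
    set ε' := (ε : ENNReal) / (Kmul + 1) with hε'
    have hε'pos : 0 < ε' := ENNReal.div_pos (by exact_mod_cast hε.ne') (by finiteness)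
    have hlt2 : EMetric.infEdist z B1 < δ + ε' :=
      lt_of_le_of_lt hzB1 (ENNReal.lt_add_right hδne hε'pos.ne')
    obtain ⟨y, hyB1, hy⟩ := EMetric.infEdist_lt_iff.mp hlt2
    have hdist : edist (S t x) (S r y) ≤ Kmul * edist z y := by
      rw [hts, edist_dist, edist_dist, hK, ← ENNReal.ofReal_mul (by positivity)]
      exact ENNReal.ofReal_le_ofReal (hlip z y r hr0)
    have hyE : EMetric.infEdist (S r y) E ≤ J := by
      refine le_trans ?_ (hB1E r hr0)
      exact le_iSup₂ (f := fun a (_ : a ∈ S r '' B1) => EMetric.infEdist a E) (S r y)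
        ⟨y, hyB1, rfl⟩
    calc EMetric.infEdist (S t x) E
        ≤ edist (S t x) (S r y) + EMetric.infEdist (S r y) E :=
          infEdist_le_edist_add_infEdist
      _ ≤ Kmul * (δ + ε') + J := by
          gcongr
          exact hdist.trans (mul_le_mul_right hy.le _)
      _ = Kmul * δ + J + Kmul * ε' := by ring
      _ ≤ Kmul * δ + J + ε := by
          gcongr
          calc Kmul * ε' ≤ (Kmul + 1) * ((ε : ENNReal) / (Kmul + 1)) := by
                rw [hε']; gcongr; exact le_self_add
            _ ≤ ε := ENNReal.mul_div_le
  refine key.trans ?_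
  rw [hK, hδ, hJ, ← ENNReal.ofReal_mul (by positivity), ← ENNReal.ofReal_add (by positivity) (by positivity)]
  apply ENNReal.ofReal_le_ofReal
  have e1 : c0 * Real.exp (L * r) * (M * Real.exp (-γ * s)) = c0 * M * Real.exp (-ω * t) := by
    rw [← hexp1, Real.exp_add]; ring
  have e2 : J0 * Real.exp (-ω0 * r) = J0 * Real.exp (-ω * t) := by rw [hexp2]
  rw [e1, e2, hω]
  ring_nf
  exact le_refl _
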